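/- arXiv:2504.01077 — 2 statements merged into one kernel-verified Lean document; each statement's English description precedes it below -/
import Mathlib

section
/- Let H be an n×n Hermitian complex matrix, ψ ∈ ℂ^n a unit vector, Ψ = ψψ†, and assume the energy variance V_Ψ = ⟨ψ, H²ψ⟩ − ⟨ψ, Hψ⟩² is strictly positive. Then for every real s, the matrix exponential of the commutator satisfies exp(s[Ψ,H]) = I + A(s)·[Ψ,H] + B(s)·([Ψ,H])², where A(s) = sin(s√V_Ψ)/√V_Ψ and B(s) = (1 − cos(s√V_Ψ))/V_Ψ. -/
open scoped InnerProductSpace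
open Matrix

noncomputable section

/-- The action of a matrix on a vector in `EuclideanSpace ℂ (Fin n)`. -/
def matApp {n : ℕ} (M : Matrix (Fin n) (Fin n) ℂ) (v : EuclideanSpace ℂ (Fin n)) :
    EuclideanSpace ℂ (Fin n) :=
  Matrix.toEuclideanLin M v

/-- The rank-one outer product `ψψ†`. -/
def outerProd {n : ℕ} (v : EuclideanSpace ℂ (Fin n)) : Matrix (Fin n) (Fin n) ℂ :=
  Matrix.of fun a b => v a * (starRingEnd ℂ) (v b)

/-- Energy mean `E_Ψ = ⟨ψ, Hψ⟩`. -/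
def energyMean {n : ℕ} (H : Matrix (Fin n) (Fin n) ℂ) (v : EuclideanSpace ℂ (Fin n)) : ℝ :=
  (⟪v, matApp H v⟫_ℂ).re

/-- Energy variance `V_Ψ = ⟨ψ, H²ψ⟩ − E_Ψ²`. -/
def energyVar {n : ℕ} (H : Matrix (Fin n) (Fin n) ℂ) (v : EuclideanSpace ℂ (Fin n)) : ℝ :=
  (⟪v, matApp (H * H) v⟫_ℂ).re - (energyMean H v) ^ 2

open scoped Nat in
/-- Exponential of an element whose cube is `-ω² • ` itself. -/
lemma exp_cube_aux {𝔸 : Type*} [NormedRing 𝔸] [NormedAlgebra ℂ 𝔸] [CompleteSpace 𝔸]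
    (M : 𝔸) (ω : ℝ) (hω : ω ≠ 0) (h3 : M * M * M = (-(ω:ℂ)^2) • M) (s : ℝ) :
    NormedSpace.exp ((s:ℂ) • M)
      = 1 + ((Real.sin (s*ω) / ω : ℝ) : ℂ) • M
          + (((1 - Real.cos (s*ω)) / ω^2 : ℝ) : ℂ) • (M * M) := by
  have hωC : (ω : ℂ) ≠ 0 := by exact_mod_cast hω
  set z : ℂ := ((s * ω : ℝ) : ℂ) with hz
  have h3' : M * (M * M) = (-(ω:ℂ)^2) • M := by rw [← mul_assoc]; exact h3
  have hodd : ∀ k : ℕ, M ^ (2*k+1) = ((-(ω:ℂ)^2)^k) • M := by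
    intro k
    induction k with
    | zero => simp
    | succ k ih =>
      have h2 : 2*(k+1)+1 = (2*k+1) + 1 + 1 := by ring
      rw [h2, pow_succ, pow_succ, ih, smul_mul_assoc, smul_mul_assoc, mul_assoc, h3',
        smul_smul, ← pow_succ]
  have heven : ∀ k : ℕ, M ^ (2*k+2) = ((-(ω:ℂ)^2)^k) • (M * M) := by
    intro k
    have h2 : 2*k+2 = (2*k+1) + 1 := by ring
    rw [h2, pow_succ, hodd, smul_mul_assoc]
  rw [NormedSpace.exp_eq_tsum (𝕂 := ℂ)]
  refine HasSum.tsum_eq ?_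
  have hcos := Complex.hasSum_cos z
  have hcos1 : HasSum (fun k : ℕ => (-1:ℂ)^(k+1) * z^(2*(k+1)) / ((2*(k+1))! : ℂ))
      (Complex.cos z - 1) := by
    have := (hasSum_nat_add_iff' (f := fun n : ℕ => (-1:ℂ)^n * z^(2*n) / ((2*n)! : ℂ)) 1).mpr hcos
    simpa using this
  have hcos2 := ((hcos1.neg.div_const ((ω:ℂ)^2)).smul_const (M * M))
  have heveq : ∀ k : ℕ, (((2*(k+1))! : ℂ)⁻¹) • ((s:ℂ) • M)^(2*(k+1))
      = (-((-1:ℂ)^(k+1) * z^(2*(k+1)) / ((2*(k+1))! : ℂ)) / (ω:ℂ)^2) • (M * M) := by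
    intro k
    have h2 : (2*(k+1)) = 2*k+2 := by ring
    rw [smul_pow, h2, heven, smul_smul, smul_smul]
    congr 1
    have hfac : ((2*k+2)! : ℂ) ≠ 0 := by exact_mod_cast (Nat.factorial_ne_zero _)
    field_simp [hz]
    rw [hz]; push_cast; ring
  have hshift : HasSum (fun k : ℕ => (((2*(k+1))! : ℂ)⁻¹) • ((s:ℂ) • M)^(2*(k+1)))
      ((-(Complex.cos z - 1) / (ω:ℂ)^2) • (M*M)) := by
    simp only [heveq]; exact hcos2
  have hevensum : HasSum (fun k : ℕ => (((2*k)! : ℂ)⁻¹) • ((s:ℂ) • M)^(2*k))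
      ((-(Complex.cos z - 1) / (ω:ℂ)^2) • (M*M) + 1) := by
    have := (hasSum_nat_add_iff
      (f := fun k : ℕ => (((2*k)! : ℂ)⁻¹) • ((s:ℂ) • M)^(2*k)) 1).mp hshift
    simpa using this
  have hoddeq : ∀ k : ℕ, (((2*k+1)! : ℂ)⁻¹) • ((s:ℂ) • M)^(2*k+1)
      = ((-1:ℂ)^k * z^(2*k+1) / ((2*k+1)! : ℂ) / (ω:ℂ)) • M := by
    intro k
    rw [smul_pow, hodd, smul_smul, smul_smul]
    congr 1
    have hfac : ((2*k+1)! : ℂ) ≠ 0 := by exact_mod_cast (Nat.factorial_ne_zero _)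
    field_simp [hz]
    rw [hz]; push_cast; ring
  have hoddsum : HasSum (fun k : ℕ => (((2*k+1)! : ℂ)⁻¹) • ((s:ℂ) • M)^(2*k+1))
      ((Complex.sin z / ω) • M) := by
    simp only [hoddeq]
    exact ((Complex.hasSum_sin z).div_const ω).smul_const M
  have htotal := HasSum.even_add_odd
    (f := fun n : ℕ => ((n ! : ℂ)⁻¹) • ((s:ℂ) • M)^n) hevensum hoddsum
  have hA : Complex.sin z / (ω:ℂ) = ((Real.sin (s*ω) / ω : ℝ) : ℂ) := by
    rw [hz, ← Complex.ofReal_sin]; push_cast; ring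
  have hB : -(Complex.cos z - 1) / (ω:ℂ)^2 = (((1 - Real.cos (s*ω)) / ω^2 : ℝ) : ℂ) := by
    rw [hz, ← Complex.ofReal_cos]; push_cast; ring
  rw [hA, hB] at htotal
  convert htotal using 1
  abel

lemma sandwich_aux {n : ℕ} (A : Matrix (Fin n) (Fin n) ℂ) (ψ : EuclideanSpace ℂ (Fin n)) :
    outerProd ψ * A * outerProd ψ = (⟪ψ, matApp A ψ⟫_ℂ) • outerProd ψ := by
  ext a b
  simp only [outerProd, matApp, Matrix.mul_apply, Matrix.of_apply, Matrix.smul_apply,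
    PiLp.inner_apply, RCLike.inner_apply, Matrix.toEuclideanLin_apply, smul_eq_mul]
  simp only [Matrix.mulVec, dotProduct]
  simp only [Finset.sum_mul, Finset.mul_sum]
  rw [Finset.sum_comm]
  refine Finset.sum_congr rfl fun c _ => Finset.sum_congr rfl fun d _ => ?_
  ring

lemma outer_idem_aux {n : ℕ} (ψ : EuclideanSpace ℂ (Fin n)) (hψ : ‖ψ‖ = 1) :
    outerProd ψ * outerProd ψ = outerProd ψ := by
  have h1 : (⟪ψ, ψ⟫_ℂ) = 1 := by
    rw [inner_self_eq_norm_sq_to_K, hψ]; norm_num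
  ext a b
  simp only [outerProd, Matrix.mul_apply, Matrix.of_apply]
  have h : ∑ c, (ψ a * (starRingEnd ℂ) (ψ c)) * (ψ c * (starRingEnd ℂ) (ψ b))
      = (ψ a * (starRingEnd ℂ) (ψ b)) * ∑ c, (starRingEnd ℂ) (ψ c) * ψ c := by
    rw [Finset.mul_sum]; apply Finset.sum_congr rfl; intros; ring
  rw [h]
  have h2 : ∑ c, (starRingEnd ℂ) (ψ c) * ψ c = 1 := by
    rw [← h1]; simp only [PiLp.inner_apply, RCLike.inner_apply]
    exact Finset.sum_congr rfl fun _ _ => mul_comm _ _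
  rw [h2, mul_one]

lemma inner_matApp_real_aux {n : ℕ} (A : Matrix (Fin n) (Fin n) ℂ) (hA : A.IsHermitian)
    (ψ : EuclideanSpace ℂ (Fin n)) :
    (⟪ψ, matApp A ψ⟫_ℂ) = ((⟪ψ, matApp A ψ⟫_ℂ).re : ℂ) := by
  have hsym := Matrix.isHermitian_iff_isSymmetric.mp hA
  have h : (starRingEnd ℂ) (⟪ψ, matApp A ψ⟫_ℂ) = ⟪ψ, matApp A ψ⟫_ℂ := by
    rw [inner_conj_symm]
    exact hsym ψ ψ
  exact (Complex.conj_eq_iff_re.mp h).symm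

lemma cube_identity_aux {n : ℕ} (H : Matrix (Fin n) (Fin n) ℂ)
    (ψ : EuclideanSpace ℂ (Fin n)) (hψ : ‖ψ‖ = 1) :
    (outerProd ψ * H - H * outerProd ψ) * (outerProd ψ * H - H * outerProd ψ)
        * (outerProd ψ * H - H * outerProd ψ)
      = ((⟪ψ, matApp H ψ⟫_ℂ) ^ 2 - ⟪ψ, matApp (H * H) ψ⟫_ℂ)
          • (outerProd ψ * H - H * outerProd ψ) := by
  set P := outerProd ψ with hP
  set E := (⟪ψ, matApp H ψ⟫_ℂ) with hEdef
  set W := (⟪ψ, matApp (H * H) ψ⟫_ℂ) with hWdef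
  have hPP : P * P = P := outer_idem_aux ψ hψ
  have hE : P * H * P = E • P := sandwich_aux H ψ
  have hW : P * (H * H) * P = W • P := sandwich_aux (H * H) ψ
  set a := P * H with ha
  set b := H * P with hb
  set c := H * P * H with hc
  have haa : a * a = E • a := by
    have h : a * a = (P * H * P) * H := by rw [ha]; noncomm_ring
    rw [h, hE, smul_mul_assoc]
  have hab : a * b = W • P := by
    have h : a * b = P * (H * H) * P := by rw [ha, hb]; noncomm_ring
    rw [h, hW]
  have hba : b * a = c := by
    have h : b * a = H * (P * P) * H := by rw [ha, hb]; noncomm_ring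
    rw [h, hPP, hc]
  have hbb : b * b = E • b := by
    have h : b * b = H * (P * H * P) := by rw [hb]; noncomm_ring
    rw [h, hE, mul_smul_comm, hb]
  have hPa : P * a = a := by rw [ha, ← mul_assoc, hPP]
  have hPb : P * b = E • P := by rw [hb, ← mul_assoc, hE]
  have hca : c * a = E • c := by
    have h : c * a = H * (P * H * P) * H := by rw [ha, hc]; noncomm_ring
    rw [h, hE, mul_smul_comm, smul_mul_assoc]
  have hcb : c * b = W • b := by
    have h : c * b = H * (P * (H * H) * P) := by rw [hb, hc]; noncomm_ring
    rw [h, hW, mul_smul_comm, hb]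
  have hK : P * H - H * P = a - b := rfl
  rw [hK]
  have hK2 : (a - b) * (a - b) = E • a - W • P - c + E • b := by
    have hex : (a - b) * (a - b) = a * a - a * b - b * a + b * b := by noncomm_ring
    rw [hex, haa, hab, hba, hbb]
  rw [hK2]
  have hex2 : (E • a - W • P - c + E • b) * (a - b)
      = E • (a * a) - E • (a * b) - W • (P * a) + W • (P * b)
        - c * a + c * b + E • (b * a) - E • (b * b) := by
    simp only [sub_mul, add_mul, smul_mul_assoc, mul_sub]
    abel
  rw [hex2, haa, hab, hba, hbb, hPa, hPb, hca, hcb]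
  simp only [smul_smul, smul_sub, sub_smul]
  ring_nf
  abel

/-- for Hermitian `H`, unit `ψ`, `V_Ψ > 0` and any real `s`,
`exp(s[Ψ,H]) = I + A(s)[Ψ,H] + B(s)[Ψ,H]²` with
`A(s) = sin(s√V)/√V` and `B(s) = (1 − cos(s√V))/V`. -/
theorem exp_commutator_polynomial {n : ℕ} (hn : 1 ≤ n)
    (H : Matrix (Fin n) (Fin n) ℂ) (hH : H.IsHermitian)
    (ψ : EuclideanSpace ℂ (Fin n)) (hψ : ‖ψ‖ = 1)
    (hV : 0 < energyVar H ψ) (s : ℝ) :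
    NormedSpace.exp ((s : ℂ) • (outerProd ψ * H - H * outerProd ψ))
      = 1
        + ((Real.sin (s * Real.sqrt (energyVar H ψ)) / Real.sqrt (energyVar H ψ) : ℝ) : ℂ)
            • (outerProd ψ * H - H * outerProd ψ)
        + (((1 - Real.cos (s * Real.sqrt (energyVar H ψ))) / energyVar H ψ : ℝ) : ℂ)
            • ((outerProd ψ * H - H * outerProd ψ) * (outerProd ψ * H - H * outerProd ψ)) := by
  letI : SeminormedRing (Matrix (Fin n) (Fin n) ℂ) := Matrix.linftyOpSemiNormedRing
  letI : NormedRing (Matrix (Fin n) (Fin n) ℂ) := Matrix.linftyOpNormedRing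
  letI : NormedAlgebra ℂ (Matrix (Fin n) (Fin n) ℂ) := Matrix.linftyOpNormedAlgebra
  set V := energyVar H ψ with hVdef
  set ω := Real.sqrt V with hωdef
  have hω : ω ≠ 0 := (Real.sqrt_pos.mpr hV).ne'
  have hωsq : ω ^ 2 = V := Real.sq_sqrt hV.le
  have hHH : (H * H).IsHermitian := by
    simp [Matrix.IsHermitian, Matrix.conjTranspose_mul, hH.eq]
  have hEr := inner_matApp_real_aux H hH ψ
  have hWr := inner_matApp_real_aux (H * H) hHH ψ
  have h3 : (outerProd ψ * H - H * outerProd ψ) * (outerProd ψ * H - H * outerProd ψ)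
      * (outerProd ψ * H - H * outerProd ψ)
      = (-(ω:ℂ)^2) • (outerProd ψ * H - H * outerProd ψ) := by
    rw [cube_identity_aux H ψ hψ]
    congr 1
    rw [hEr, hWr]
    have hωC : ((ω:ℂ))^2 = (V:ℂ) := by
      rw [← Complex.ofReal_pow, hωsq]
    rw [hωC, hVdef]
    simp only [energyVar, energyMean]
    push_cast
    ring
  have := exp_cube_aux (outerProd ψ * H - H * outerProd ψ) ω hω h3 s
  rw [hωsq] at this
  exact this
end
end

section
/- Unitary synthesis for QSP without post-selection (main theorem): let H be an n×n Hermitian complex matrix, ψ₀ ∈ ℂ^n a unit vector, K ≥ 1, and z₀, …, z_{K−1} ∈ ℂ. Define recursively unit vectors ψ_{k+1} = exp(iθ_k·Ψ_k) · exp(s_k·[Ψ_k,H]) · ψ_k, where Ψ_k = ψ_kψ_k†, E_k = ⟨ψ_k, Hψ_k⟩, V_k = ⟨ψ_k, H²ψ_k⟩ − E_k², s_k = −(1/√V_k)·arccos( |E_k − z_k| / √(V_k + |E_k − z_k|²) ), and θ_k ∈ ℝ satisfies e^{iθ_k} = (E_k − z_k)/|E_k − z_k|. Assume V_k > 0 and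 E_k ≠ z_k for every k < K. Then, with p(H) = ∏_{k=0}^{K−1}(H − z_kI) (a monic degree-K polynomial in H, all factors commuting), one has p(H)ψ₀ ≠ 0 and ψ_K = p(H)ψ₀ / ‖p(H)ψ₀‖. -/
open scoped InnerProductSpace
open Matrix

noncomputable section

variable {n : ℕ}

lemma matApp_add (M N : Matrix (Fin n) (Fin n) ℂ) (v : EuclideanSpace ℂ (Fin n)) :
    matApp (M + N) v = matApp M v + matApp N v := by
  simp [matApp, map_add]

lemma matApp_smulM (c : ℂ) (M : Matrix (Fin n) (Fin n) ℂ) (v : EuclideanSpace ℂ (Fin n)) :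
    matApp (c • M) v = c • matApp M v := by
  simp [matApp, _root_.map_smul]

lemma matApp_mul (M N : Matrix (Fin n) (Fin n) ℂ) (v : EuclideanSpace ℂ (Fin n)) :
    matApp (M * N) v = matApp M (matApp N v) := by
  simp [matApp, Matrix.toEuclideanLin_apply, Matrix.mulVec_mulVec]

lemma matApp_one (v : EuclideanSpace ℂ (Fin n)) : matApp 1 v = v := by
  simp [matApp, Matrix.toEuclideanLin_apply]

lemma matApp_addv (M : Matrix (Fin n) (Fin n) ℂ) (u v : EuclideanSpace ℂ (Fin n)) :
    matApp M (u + v) = matApp M u + matApp M v := by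
  simp [matApp, map_add]

lemma matApp_smulv (M : Matrix (Fin n) (Fin n) ℂ) (c : ℂ) (v : EuclideanSpace ℂ (Fin n)) :
    matApp M (c • v) = c • matApp M v := by
  simp [matApp, _root_.map_smul]

lemma matApp_exp_eig (M : Matrix (Fin n) (Fin n) ℂ) (w : EuclideanSpace ℂ (Fin n)) (μ : ℂ)
    (h : matApp M w = μ • w) :
    matApp (NormedSpace.exp M) w = Complex.exp μ • w := by
  letI : NormedRing (Matrix (Fin n) (Fin n) ℂ) := Matrix.linftyOpNormedRing
  letI : NormedAlgebra ℂ (Matrix (Fin n) (Fin n) ℂ) := Matrix.linftyOpNormedAlgebra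
  have hpow : ∀ k : ℕ, matApp (M ^ k) w = μ ^ k • w := by
    intro k
    induction k with
    | zero => simpa using matApp_one w
    | succ k ih =>
      rw [pow_succ, matApp_mul, h, matApp_smulv, ih, smul_smul, ← pow_succ']
  let L : Matrix (Fin n) (Fin n) ℂ →ₗ[ℂ] EuclideanSpace ℂ (Fin n) :=
    { toFun := fun A => matApp A w
      map_add' := fun A B => matApp_add A B w
      map_smul' := fun c A => matApp_smulM c A w }
  have hsum : Summable (fun k : ℕ => ((k.factorial : ℂ)⁻¹) • M ^ k) :=
    NormedSpace.expSeries_summable' (𝕂 := ℂ) M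
  have h1 : matApp (NormedSpace.exp M) w
      = ∑' k : ℕ, matApp (((k.factorial : ℂ)⁻¹) • M ^ k) w := by
    rw [NormedSpace.exp_eq_tsum (𝕂 := ℂ)]
    exact (L.toContinuousLinearMap.map_tsum hsum)
  rw [h1]
  have h2 : ∀ k : ℕ, matApp (((k.factorial : ℂ)⁻¹) • M ^ k) w
      = (((k.factorial : ℂ)⁻¹) * μ ^ k) • w := by
    intro k
    rw [matApp_smulM, hpow, smul_smul]
  simp_rw [h2]
  rw [Summable.tsum_smul_const]
  · congr 1
    rw [Complex.exp_eq_exp_ℂ, NormedSpace.exp_eq_tsum (𝕂 := ℂ)]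
    simp [smul_eq_mul]
  · exact NormedSpace.expSeries_summable' (𝕂 := ℂ) μ |>.congr (by simp [smul_eq_mul])

lemma matApp_outer (v u : EuclideanSpace ℂ (Fin n)) :
    matApp (outerProd v) u = ⟪v, u⟫_ℂ • v := by
  ext a
  simp only [matApp, Matrix.toEuclideanLin_apply, outerProd, PiLp.smul_apply, smul_eq_mul]
  rw [show ((Matrix.of fun a b => v a * (starRingEnd ℂ) (v b)) *ᵥ u.ofLp) a = ((Matrix.of fun a b => v a * (starRingEnd ℂ) (v b)) *ᵥ (fun i => u i)) a from rfl]
  simp only [Matrix.mulVec, dotProduct, Matrix.of_apply, PiLp.inner_apply,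
    RCLike.inner_apply, smul_eq_mul]
  rw [Finset.sum_mul]
  congr 1; funext b; ring

lemma matApp_subv (M : Matrix (Fin n) (Fin n) ℂ) (u v : EuclideanSpace ℂ (Fin n)) :
    matApp M (u - v) = matApp M u - matApp M v := by
  simp [matApp, map_sub]

lemma matApp_sub (M N : Matrix (Fin n) (Fin n) ℂ) (v : EuclideanSpace ℂ (Fin n)) :
    matApp (M - N) v = matApp M v - matApp N v := by
  simp [matApp, map_sub]

lemma inner_matApp_symm {H : Matrix (Fin n) (Fin n) ℂ} (hH : H.IsHermitian)
    (x y : EuclideanSpace ℂ (Fin n)) : ⟪matApp H x, y⟫_ℂ = ⟪x, matApp H y⟫_ℂ :=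
  (Matrix.isHermitian_iff_isSymmetric.mp hH) x y

/-- The step duration `s = −(1/√V)·arccos(|E − z|/√(V + |E − z|²))`. -/
def stepDur {n : ℕ} (H : Matrix (Fin n) (Fin n) ℂ) (v : EuclideanSpace ℂ (Fin n)) (z : ℂ) : ℝ :=
  -(1 / Real.sqrt (energyVar H v))
    * Real.arccos (‖(energyMean H v : ℂ) - z‖
        / Real.sqrt (energyVar H v + ‖(energyMean H v : ℂ) - z‖ ^ 2))

set_option maxHeartbeats 1000000 in
lemma qsp_step (H : Matrix (Fin n) (Fin n) ℂ) (hH : H.IsHermitian)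
    (v : EuclideanSpace ℂ (Fin n)) (hv : ‖v‖ = 1) (z : ℂ) (θ : ℝ)
    (hV : 0 < energyVar H v)
    (hEz : (energyMean H v : ℂ) ≠ z)
    (hθ : Complex.exp (Complex.I * (θ : ℂ))
      = ((energyMean H v : ℂ) - z) / (‖(energyMean H v : ℂ) - z‖ : ℂ)) :
    matApp (H - z • 1) v ≠ 0 ∧
    matApp (NormedSpace.exp ((Complex.I * (θ : ℂ)) • outerProd v))
        (matApp (NormedSpace.exp
            (((stepDur H v z : ℝ) : ℂ) • (outerProd v * H - H * outerProd v))) v)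
      = (‖matApp (H - z • 1) v‖ : ℂ)⁻¹ • matApp (H - z • 1) v := by
  set E : ℝ := energyMean H v with hEdef
  set V : ℝ := energyVar H v with hVdef
  set r : ℝ := ‖(E : ℂ) - z‖ with hrdef
  have hr0 : 0 < r := by
    rw [hrdef]
    exact norm_pos_iff.mpr (sub_ne_zero.mpr hEz)
  have hNr2 : 0 < V + r ^ 2 := by positivity
  set Nr : ℝ := Real.sqrt (V + r ^ 2) with hNrdef
  have hNr : 0 < Nr := Real.sqrt_pos.mpr hNr2
  have hNrsq : Nr ^ 2 = V + r ^ 2 := Real.sq_sqrt hNr2.le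
  set c : ℝ := Real.sqrt V with hcdef
  have hc : 0 < c := Real.sqrt_pos.mpr hV
  have hcsq : c ^ 2 = V := Real.sq_sqrt hV.le
  clear_value E V r Nr c
  have hvv : ⟪v, v⟫_ℂ = 1 := by
    rw [inner_self_eq_norm_sq_to_K, hv]; norm_num
  have hE : ⟪v, matApp H v⟫_ℂ = (E : ℂ) := by
    have hre : (starRingEnd ℂ) ⟪v, matApp H v⟫_ℂ = ⟪v, matApp H v⟫_ℂ := by
      rw [inner_conj_symm]
      exact inner_matApp_symm hH v v
    have h3 := Complex.conj_eq_iff_re.mp hre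
    rw [← h3, hEdef]
    rfl
  set w : EuclideanSpace ℂ (Fin n) := matApp H v - (E : ℂ) • v with hwdef
  clear_value w
  have hHv : matApp H v = (E : ℂ) • v + w := by rw [hwdef]; abel
  have hvw : ⟪v, w⟫_ℂ = 0 := by
    rw [hwdef, inner_sub_right, inner_smul_right, hE, hvv]; ring
  have hwv : ⟪w, v⟫_ℂ = 0 := by
    rw [← inner_conj_symm, hvw, map_zero]
  have hΨv : matApp (outerProd v) v = v := by rw [matApp_outer, hvv, one_smul]
  have hΨw : matApp (outerProd v) w = 0 := by rw [matApp_outer, hvw, zero_smul]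
  have hH2 : ⟪v, matApp (H * H) v⟫_ℂ = ((V + E ^ 2 : ℝ) : ℂ) := by
    have : (⟪v, matApp (H * H) v⟫_ℂ).re = V + E ^ 2 := by
      rw [hVdef, hEdef]; unfold energyVar energyMean; ring
    have hre : (starRingEnd ℂ) ⟪v, matApp (H * H) v⟫_ℂ = ⟪v, matApp (H * H) v⟫_ℂ := by
      calc (starRingEnd ℂ) ⟪v, matApp (H * H) v⟫_ℂ
          = ⟪matApp (H * H) v, v⟫_ℂ := inner_conj_symm _ _
        _ = ⟪matApp H v, matApp H v⟫_ℂ := by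
            rw [matApp_mul]; exact inner_matApp_symm hH (matApp H v) v
        _ = ⟪v, matApp (H * H) v⟫_ℂ := by
            rw [matApp_mul]; exact inner_matApp_symm hH v (matApp H v)
    have h3 := Complex.conj_eq_iff_re.mp hre
    rw [← h3, this]
  have hvHw : ⟪v, matApp H w⟫_ℂ = (V : ℂ) := by
    rw [hwdef, matApp_subv, matApp_smulv, inner_sub_right, inner_smul_right, ← matApp_mul, hH2, hE]
    push_cast
    ring
  have hww : ⟪w, w⟫_ℂ = (V : ℂ) := by
    nth_rewrite 2 [hwdef]
    rw [inner_sub_right, inner_smul_right, hwv, mul_zero, sub_zero]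
    calc ⟪w, matApp H v⟫_ℂ = (starRingEnd ℂ) ⟪matApp H v, w⟫_ℂ := (inner_conj_symm _ _).symm
      _ = (starRingEnd ℂ) ⟪v, matApp H w⟫_ℂ := by rw [inner_matApp_symm hH]
      _ = (V : ℂ) := by rw [hvHw, Complex.conj_ofReal]
  set A : Matrix (Fin n) (Fin n) ℂ := outerProd v * H - H * outerProd v with hAdef
  clear_value A
  have hAv : matApp A v = -w := by
    rw [hAdef, matApp_sub, matApp_mul, matApp_mul, hΨv, matApp_outer, hE, hHv]
    abel
  have hAw : matApp A w = (V : ℂ) • v := by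
    rw [hAdef, matApp_sub, matApp_mul, matApp_mul, hΨw, matApp_outer, hvHw]
    simp [matApp, map_zero]
  set s : ℝ := stepDur H v z with hsdef
  have hs : s = -(1 / c) * Real.arccos (r / Nr) := by
    rw [hsdef]; unfold stepDur
    rw [← hEdef, ← hVdef, ← hrdef, ← hNrdef, ← hcdef]
  clear_value s
  have hcC : (c : ℂ) ≠ 0 := by exact_mod_cast hc.ne'
  have hNrC : (Nr : ℂ) ≠ 0 := by exact_mod_cast hNr.ne'
  have hrC : (r : ℂ) ≠ 0 := by exact_mod_cast hr0.ne'
  have hVc : (V : ℂ) = (c : ℂ) ^ 2 := by exact_mod_cast hcsq.symm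
  set wp : EuclideanSpace ℂ (Fin n) := v + (Complex.I / (c : ℂ)) • w with hwp
  set wm : EuclideanSpace ℂ (Fin n) := v - (Complex.I / (c : ℂ)) • w with hwm
  clear_value wp wm
  have hAwp : matApp ((s : ℂ) • A) wp = ((s : ℂ) * (Complex.I * (c : ℂ))) • wp := by
    rw [matApp_smulM, hwp, matApp_addv, matApp_smulv, hAv, hAw, hVc]
    match_scalars
    all_goals field_simp
    all_goals try ring
    all_goals (rw [Complex.I_sq]; ring)
  have hAwm : matApp ((s : ℂ) • A) wm = (-((s : ℂ) * (Complex.I * (c : ℂ)))) • wm := by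
    rw [matApp_smulM, hwm, matApp_subv, matApp_smulv, hAv, hAw, hVc]
    match_scalars
    all_goals field_simp
    all_goals try ring
    all_goals (rw [Complex.I_sq]; ring)
  have hexp_p := matApp_exp_eig _ _ _ hAwp
  have hexp_m := matApp_exp_eig _ _ _ hAwm
  have hv2 : v = (2 : ℂ)⁻¹ • (wp + wm) := by
    rw [hwp, hwm]
    match_scalars <;> field_simp <;> ring
  have hrNr : r ≤ Nr := by
    rw [hNrdef]
    have h2 := Real.sqrt_le_sqrt (show r ^ 2 ≤ V + r ^ 2 by linarith)
    rwa [Real.sqrt_sq hr0.le] at h2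
  have hcos : Real.cos (c * s) = r / Nr := by
    rw [hs, show c * (-(1 / c) * Real.arccos (r / Nr)) = -Real.arccos (r / Nr) by
      field_simp]
    rw [Real.cos_neg, Real.cos_arccos]
    · exact le_trans (by norm_num) (div_nonneg hr0.le hNr.le)
    · rw [div_le_one hNr]; exact hrNr
  have hsin : Real.sin (c * s) = -(c / Nr) := by
    rw [hs, show c * (-(1 / c) * Real.arccos (r / Nr)) = -Real.arccos (r / Nr) by
      field_simp]
    rw [Real.sin_neg, Real.sin_arccos]
    have h14 : 1 - (r / Nr) ^ 2 = (c / Nr) ^ 2 := by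
      field_simp
      nlinarith [hNrsq, hcsq]
    rw [h14, Real.sqrt_sq (div_nonneg hc.le hNr.le)]
  have he1 : Complex.exp ((s : ℂ) * (Complex.I * (c : ℂ)))
      = ((r / Nr : ℝ) : ℂ) + ((-(c / Nr) : ℝ) : ℂ) * Complex.I := by
    rw [show (s : ℂ) * (Complex.I * (c : ℂ)) = ((c * s : ℝ) : ℂ) * Complex.I by
      push_cast; ring]
    rw [Complex.exp_mul_I, ← Complex.ofReal_cos, ← Complex.ofReal_sin, hcos, hsin]
  have he2 : Complex.exp (-((s : ℂ) * (Complex.I * (c : ℂ))))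
      = ((r / Nr : ℝ) : ℂ) - ((-(c / Nr) : ℝ) : ℂ) * Complex.I := by
    rw [show -((s : ℂ) * (Complex.I * (c : ℂ))) = ((-(c * s) : ℝ) : ℂ) * Complex.I by
      push_cast; ring]
    rw [Complex.exp_mul_I, ← Complex.ofReal_cos, ← Complex.ofReal_sin, Real.cos_neg,
      Real.sin_neg, hcos, hsin]
    push_cast
    ring
  have hu1 : matApp (NormedSpace.exp ((s : ℂ) • A)) v
      = ((r / Nr : ℝ) : ℂ) • v + ((1 / Nr : ℝ) : ℂ) • w := by
    conv_lhs => rw [hv2]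
    rw [matApp_smulv, matApp_addv, hexp_p, hexp_m, he1, he2, hwp, hwm]
    push_cast
    match_scalars
    all_goals field_simp
    all_goals try ring
    all_goals (rw [Complex.I_sq]; ring)
  have hPv : matApp ((Complex.I * (θ : ℂ)) • outerProd v) v = (Complex.I * (θ : ℂ)) • v := by
    rw [matApp_smulM, hΨv]
  have hPw : matApp ((Complex.I * (θ : ℂ)) • outerProd v) w = (0 : ℂ) • w := by
    rw [matApp_smulM, hΨw, smul_zero, zero_smul]
  have hev := matApp_exp_eig _ _ _ hPv
  have hew := matApp_exp_eig _ _ _ hPw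
  rw [Complex.exp_zero, one_smul] at hew
  set u : EuclideanSpace ℂ (Fin n) := matApp (H - z • 1) v with hu
  clear_value u
  have huw : u = ((E : ℂ) - z) • v + w := by
    rw [hu, matApp_sub, matApp_smulM, matApp_one, hHv, sub_smul]
    abel
  have huu : ⟪u, u⟫_ℂ = ((V + r ^ 2 : ℝ) : ℂ) := by
    rw [huw, inner_add_left, inner_add_right, inner_add_right, inner_smul_left,
      inner_smul_right, inner_smul_right, inner_smul_left, hvv, hvw, hwv, hww]
    have habs : (starRingEnd ℂ) ((E : ℂ) - z) * ((E : ℂ) - z) = ((r : ℝ) : ℂ) ^ 2 := by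
      rw [mul_comm, Complex.mul_conj, hrdef]
      norm_cast
      exact (Complex.sq_norm _).symm
    push_cast
    linear_combination habs
  have hnu : ‖u‖ = Nr := by
    have h1 : ‖u‖ = Real.sqrt ((⟪u, u⟫_ℂ).re) := norm_eq_sqrt_re_inner (𝕜 := ℂ) u
    rw [h1, huu, Complex.ofReal_re, hNrdef]
  have hune : u ≠ 0 := by
    intro h0
    rw [h0, norm_zero] at hnu
    exact hNr.ne hnu
  refine ⟨hune, ?_⟩
  rw [hu1, matApp_addv, matApp_smulv, matApp_smulv, hev, hew, hθ, hnu, huw]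
  match_scalars
  · field_simp
  · field_simp


/-- The monic polynomial `p(H) = ∏_{k<K} (H − z_k I)` (all factors commute). -/
def polyProd {n : ℕ} (H : Matrix (Fin n) (Fin n) ℂ) (z : ℕ → ℂ) (K : ℕ) :
    Matrix (Fin n) (Fin n) ℂ :=
  ((List.range K).map fun k => H - z k • 1).prod

lemma polyProd_succ (H : Matrix (Fin n) (Fin n) ℂ) (z : ℕ → ℂ) (k : ℕ) :
    polyProd H z (k + 1) = (H - z k • 1) * polyProd H z k := by
  have hcommaux : ∀ a b : ℂ, Commute (H - a • 1) (H - b • (1 : Matrix (Fin n) (Fin n) ℂ)) := by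
    intro a b
    have h1 : Commute H (b • (1 : Matrix (Fin n) (Fin n) ℂ)) := (Commute.one_right H).smul_right b
    have h2 : Commute (a • (1 : Matrix (Fin n) (Fin n) ℂ)) H := (Commute.one_left H).smul_left a
    have h3 : Commute (a • (1 : Matrix (Fin n) (Fin n) ℂ)) (b • (1 : Matrix (Fin n) (Fin n) ℂ)) :=
      ((Commute.refl (1 : Matrix (Fin n) (Fin n) ℂ)).smul_left a).smul_right b
    exact ((Commute.refl H).sub_right h1).sub_left (h2.sub_right h3)
  have hcomm : Commute (H - z k • 1) (polyProd H z k) := by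
    apply Commute.list_prod_right
    intro x hx
    simp only [List.mem_map, List.mem_range] at hx
    obtain ⟨j, _, rfl⟩ := hx
    exact hcommaux (z k) (z j)
  unfold polyProd
  rw [List.range_succ, List.map_append, List.prod_append]
  simp only [List.map_cons, List.map_nil, List.prod_cons, List.prod_nil, mul_one]
  exact (hcomm.eq).symm


/-- Unitary synthesis for QSP without post-selection: the recursion
`ψ_{k+1} = exp(iθ_k Ψ_k)·exp(s_k [Ψ_k, H])·ψ_k` with the stated durations and phases
produces `ψ_K = p(H)ψ₀/‖p(H)ψ₀‖` where `p(H) = ∏_{k<K}(H − z_k I)`. -/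
theorem qsp_unitary_synthesis {n : ℕ} (hn : 1 ≤ n)
    (H : Matrix (Fin n) (Fin n) ℂ) (hH : H.IsHermitian)
    (K : ℕ) (hK : 1 ≤ K) (z : ℕ → ℂ) (θ : ℕ → ℝ)
    (ψ : ℕ → EuclideanSpace ℂ (Fin n)) (hψ0 : ‖ψ 0‖ = 1)
    (hV : ∀ k < K, 0 < energyVar H (ψ k))
    (hEz : ∀ k < K, (energyMean H (ψ k) : ℂ) ≠ z k)
    (hθ : ∀ k < K, Complex.exp (Complex.I * (θ k : ℂ))
      = ((energyMean H (ψ k) : ℂ) - z k)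
          / (‖(energyMean H (ψ k) : ℂ) - z k‖ : ℂ))
    (hrec : ∀ k < K, ψ (k + 1)
      = matApp (NormedSpace.exp ((Complex.I * (θ k : ℂ)) • outerProd (ψ k)))
          (matApp (NormedSpace.exp
              (((stepDur H (ψ k) (z k) : ℝ) : ℂ)
                • (outerProd (ψ k) * H - H * outerProd (ψ k)))) (ψ k))) :
    matApp (polyProd H z K) (ψ 0) ≠ 0 ∧
    ψ K = (‖matApp (polyProd H z K) (ψ 0)‖ : ℂ)⁻¹ • matApp (polyProd H z K) (ψ 0) := by
  have main : ∀ k, k ≤ K → matApp (polyProd H z k) (ψ 0) ≠ 0 ∧ ‖ψ k‖ = 1 ∧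
      ψ k = (‖matApp (polyProd H z k) (ψ 0)‖ : ℂ)⁻¹ • matApp (polyProd H z k) (ψ 0) := by
    intro k
    induction k with
    | zero =>
      intro _
      have h0 : polyProd H z 0 = 1 := by simp [polyProd]
      rw [h0, matApp_one]
      have hne0 : ψ 0 ≠ 0 := by
        intro h; rw [h, norm_zero] at hψ0; norm_num at hψ0
      refine ⟨hne0, hψ0, ?_⟩
      rw [hψ0]
      norm_num
    | succ k ih =>
      intro hk1
      have hkK : k < K := hk1
      obtain ⟨hne, hnorm, hpsi⟩ := ih (le_of_lt hkK)
      obtain ⟨hstep_ne, hstep_eq⟩ :=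
        qsp_step H hH (ψ k) hnorm (z k) (θ k) (hV k hkK) (hEz k hkK) (hθ k hkK)
      have hψk1 : ψ (k + 1)
          = (‖matApp (H - z k • 1) (ψ k)‖ : ℂ)⁻¹ • matApp (H - z k • 1) (ψ k) := by
        rw [hrec k hkK]; exact hstep_eq
      set a : ℝ := ‖matApp (polyProd H z k) (ψ 0)‖ with ha
      have ha0 : 0 < a := norm_pos_iff.mpr hne
      have hlin : matApp (H - z k • 1) (ψ k)
          = ((a : ℂ))⁻¹ • matApp (polyProd H z (k + 1)) (ψ 0) := by
        rw [hpsi, matApp_smulv, polyProd_succ, matApp_mul]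
      have hne1 : matApp (polyProd H z (k + 1)) (ψ 0) ≠ 0 := by
        intro h0
        apply hstep_ne
        rw [hlin, h0, smul_zero]
      have hb0 : (0 : ℝ) < ‖matApp (polyProd H z (k + 1)) (ψ 0)‖ := norm_pos_iff.mpr hne1
      have haC : (a : ℂ) ≠ 0 := by exact_mod_cast ha0.ne'
      have hbC : ((‖matApp (polyProd H z (k + 1)) (ψ 0)‖ : ℝ) : ℂ) ≠ 0 := by
        exact_mod_cast hb0.ne'
      have hnormstep : ‖matApp (H - z k • 1) (ψ k)‖
          = a⁻¹ * ‖matApp (polyProd H z (k + 1)) (ψ 0)‖ := by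
        rw [hlin, norm_smul, norm_inv, Complex.norm_real, Real.norm_eq_abs, abs_of_pos ha0]
      refine ⟨hne1, ?_, ?_⟩
      · rw [hψk1, norm_smul, norm_inv, Complex.norm_real, norm_norm]
        exact inv_mul_cancel₀ (norm_ne_zero_iff.mpr hstep_ne)
      · rw [hψk1, hnormstep, hlin, smul_smul]
        congr 1
        push_cast
        field_simp
  obtain ⟨h1, _, h3⟩ := main K le_rfl
  exact ⟨h1, h3⟩
end
end
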